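/- Suppose given surjective O-algebra homomorphisms π_R: R → O and π_S: S → O with π_S ∘ φ = π_R. Set Φ_R = (ker π_R)/(ker π_R)² and η_S = π_S(Ann_S(ker π_S)) ⊆ O, where Ann_S(ker π_S) is the annihilator ideal of ker π_S in S. Assume that ker π_R is a principal ideal of R, that η_S ≠ 0 (so that O/η_S is finite), and that the cardinality of Φ_R is at most the cardinality of O/η_S. Then φ: R → S is an isomorphism of O-algebras. -/

import Mathlib

open IsLocalRing

private lemma card_le_of_ker_le {A B C : Type*} [AddCommGroup A] [AddCommGroup B]
    [AddCommGroup C] [Finite B] (f : A →+ B) (g : A →+ C) (hf : Function.Surjective f)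
    (hg : Function.Surjective g) (h : ∀ a, f a = 0 → g a = 0) :
    Nat.card C ≤ Nat.card B := by
  apply Nat.card_le_card_of_surjective (g ∘ Function.surjInv hf)
  intro c
  obtain ⟨a, ha⟩ := hg c
  refine ⟨f a, ?_⟩
  have h1 : f (Function.surjInv hf (f a) - a) = 0 := by
    simp [Function.surjInv_eq hf]
  have h2 := h _ h1
  simp only [map_sub, sub_eq_zero] at h2
  simpa [Function.comp, h2] using ha

/-- Proposition `lenstraredone` of Berger–Klosin: with `O`, `R`, `S`, `φ`
as in the setup, suppose given surjective `O`-algebra maps `π_R : R → O` and `π_S : S → O`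
with `π_S ∘ φ = π_R`.  Set `Φ_R = (ker π_R)/(ker π_R)²` and `η_S = π_S(Ann_S (ker π_S))`.
If `ker π_R` is principal, `η_S ≠ 0`, and `#Φ_R ≤ #(O/η_S)`, then `φ` is an isomorphism. -/
theorem wiles_lenstra_variant
    {O : Type*} [CommRing O] [IsDomain O] [IsDiscreteValuationRing O]
    [IsAdicComplete (maximalIdeal O) O] [Finite (ResidueField O)]
    (ϖ : O) (hϖ : Irreducible ϖ)
    {R S : Type*} [CommRing R] [CommRing S] [IsLocalRing R] [IsLocalRing S]
    [IsNoetherianRing R] [IsNoetherianRing S]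
    [Algebra O R] [Algebra O S]
    [IsAdicComplete (maximalIdeal R) R] [IsAdicComplete (maximalIdeal S) S]
    -- the residue field of `R` is `F`, the residue field of `O`
    (hRsurj : Function.Surjective ((residue R).comp (algebraMap O R)))
    (hRker : RingHom.ker ((residue R).comp (algebraMap O R)) = maximalIdeal O)
    -- the residue field of `S` is `F`, the residue field of `O`
    (hSsurj : Function.Surjective ((residue S).comp (algebraMap O S)))
    (hSker : RingHom.ker ((residue S).comp (algebraMap O S)) = maximalIdeal O)
    -- `S` is a finitely generated free `O`-module
    [Module.Finite O S] [Module.Free O S]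
    (φ : R →ₐ[O] S) (hφ : Function.Surjective φ)
    (πR : R →ₐ[O] O) (hπR : Function.Surjective πR)
    (πS : S →ₐ[O] O) (hπS : Function.Surjective πS)
    (hcomp : πS.comp φ = πR)
    -- `ker π_R` is a principal ideal of `R`
    (hprin : (RingHom.ker πR).IsPrincipal)
    -- `η_S = π_S(Ann_S(ker π_S)) ≠ 0`
    (hη : Ideal.map πS (Submodule.annihilator (RingHom.ker πS : Ideal S)) ≠ ⊥)
    -- `Φ_R = (ker π_R)/(ker π_R)²` is finite of cardinality at most `#(O/η_S)`
    (hΦfin : Finite (Submodule.map ((RingHom.ker πR ^ 2 : Ideal R)).mkQ (RingHom.ker πR)))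
    (hcard : Nat.card (Submodule.map ((RingHom.ker πR ^ 2 : Ideal R)).mkQ (RingHom.ker πR)) ≤
      Nat.card (O ⧸ Ideal.map πS (Submodule.annihilator (RingHom.ker πS : Ideal S)))) :
    Function.Bijective φ := by
  refine ⟨?_, hφ⟩
  set I : Ideal R := RingHom.ker πR with hIdef
  set J : Ideal S := RingHom.ker πS with hJdef
  have hπSφ : ∀ x, πS (φ x) = πR x := fun x => by
    rw [← hcomp]; rfl
  -- `φ(I) = J`
  have hmapIJ : Ideal.map φ I = J := by
    apply le_antisymm
    · rw [Ideal.map_le_iff_le_comap]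
      intro x hx
      have : πS (φ x) = 0 := by rw [hπSφ]; exact hx
      exact this
    · intro y hy
      obtain ⟨x, rfl⟩ := hφ y
      refine Ideal.mem_map_of_mem φ ?_
      show πR x = 0
      rw [← hπSφ]; exact hy
  obtain ⟨r, hrI⟩ := hprin.principal
  have hrmem : r ∈ I := by rw [hrI]; exact Ideal.mem_span_singleton_self r
  have hJs : J = Ideal.span {φ r} := by
    rw [← hmapIJ, hrI]
    show Ideal.map φ (Ideal.span {r}) = _
    rw [Ideal.map_span, Set.image_singleton]
  have hφrJ : φ r ∈ J := by rw [hJs]; exact Ideal.mem_span_singleton_self _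
  set A : Ideal S := Submodule.annihilator (J : Ideal S) with hAdef
  set η : Ideal O := Ideal.map πS A with hηdef
  -- an element of the annihilator not mapping to zero
  obtain ⟨c, hcη, hc0⟩ := Submodule.exists_mem_ne_zero_of_ne_bot hη
  obtain ⟨t0, ht0A, ht0c⟩ := (Ideal.mem_map_iff_of_surjective πS hπS).mp hcη
  -- key: an element of `J` annihilating `J` is zero
  have hzero : ∀ t, t ∈ J → (∀ j ∈ J, t * j = 0) → t = 0 := by
    intro t htJ htann
    have h1 : t0 * t = 0 := by
      have := Submodule.mem_annihilator.mp ht0A t htJ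
      simpa [smul_eq_mul] using this
    have h2 : t0 - algebraMap O S c ∈ J := by
      show πS _ = 0
      rw [map_sub, ht0c, AlgHom.commutes]
      simp
    have h3 : t * (t0 - algebraMap O S c) = 0 := htann _ h2
    have h4 : c • t = 0 := by
      rw [Algebra.smul_def]
      have h5 : t * t0 - t * algebraMap O S c = 0 := by rw [← mul_sub]; exact h3
      rw [mul_comm t t0, h1, zero_sub, neg_eq_zero] at h5
      rw [← h5, mul_comm]
    rcases smul_eq_zero.mp h4 with h | h
    · exact absurd h hc0
    · exact h
  -- the induced map on quotients
  have hle : (I ^ 2 : Ideal R) ≤ (J ^ 2).comap (φ : R →+* S) := by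
    intro x hx
    show φ x ∈ J ^ 2
    rw [← hmapIJ, ← Ideal.map_pow]
    exact Ideal.mem_map_of_mem φ hx
  set φbar : R ⧸ (I ^ 2 : Ideal R) →+* S ⧸ (J ^ 2 : Ideal S) :=
    Ideal.quotientMap (J ^ 2) (φ : R →+* S) hle with hφbar
  have hq : ∀ x : R, φbar (((I ^ 2 : Ideal R)).mkQ x) = ((J ^ 2 : Ideal S)).mkQ (φ x) :=
    fun x => Ideal.quotientMap_mk
  set ΦR := Submodule.map ((I ^ 2 : Ideal R)).mkQ I with hΦR
  set ΦS := Submodule.map ((J ^ 2 : Ideal S)).mkQ J with hΦS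
  have hFmem : ∀ a : ΦR, φbar a.1 ∈ ΦS := by
    rintro ⟨a, ha⟩
    obtain ⟨x, hx, rfl⟩ := ha
    exact Submodule.mem_map.mpr ⟨φ x, by
      constructor
      · rw [← hmapIJ]; exact Ideal.mem_map_of_mem φ hx
      · exact (hq x).symm⟩
  set F : ΦR → ΦS := fun a => ⟨φbar a.1, hFmem a⟩ with hF
  have Fsurj : Function.Surjective F := by
    rintro ⟨b, hb⟩
    obtain ⟨y, hyJ, rfl⟩ := hb
    rw [← hmapIJ] at hyJ
    obtain ⟨x, hxI, rfl⟩ := (Ideal.mem_map_iff_of_surjective φ hφ).mp hyJ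
    exact ⟨⟨((I ^ 2 : Ideal R)).mkQ x, Submodule.mem_map.mpr ⟨x, hxI, rfl⟩⟩,
      Subtype.ext (hq x)⟩
  have hΦSfin : Finite ΦS := Finite.of_surjective F Fsurj
  -- surjection from `ΦS` onto `O ⧸ η` (cardinality-wise)
  have hcard2 : Nat.card (O ⧸ η) ≤ Nat.card ΦS := by
    have hfmem : ∀ u : S, ((J ^ 2 : Ideal S)).mkQ (φ r * u) ∈ ΦS := fun u =>
      Submodule.mem_map.mpr ⟨φ r * u, Ideal.mul_mem_right u _ hφrJ, rfl⟩
    set f : S →+ ΦS := AddMonoidHom.mk' (fun u => ⟨((J ^ 2 : Ideal S)).mkQ (φ r * u), hfmem u⟩)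
      (by intro u v; apply Subtype.ext; simp [mul_add]) with hfdef
    set g : S →+ O ⧸ η := AddMonoidHom.mk' (fun u => Ideal.Quotient.mk η (πS u))
      (by intro u v; simp) with hgdef
    have hfsurj : Function.Surjective f := by
      rintro ⟨b, hb⟩
      obtain ⟨j, hjJ, rfl⟩ := hb
      rw [hJs] at hjJ
      obtain ⟨u, hu⟩ := Ideal.mem_span_singleton'.mp hjJ
      refine ⟨u, Subtype.ext ?_⟩
      show ((J ^ 2 : Ideal S)).mkQ (φ r * u) = _
      rw [show φ r * u = j from by rw [← hu]; ring]
    have hgsurj : Function.Surjective g := fun b => by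
      obtain ⟨y, rfl⟩ := Ideal.Quotient.mk_surjective (I := η) b
      obtain ⟨u, hu⟩ := hπS y
      exact ⟨u, by simp [hgdef, hu]⟩
    have hker : ∀ u : S, f u = 0 → g u = 0 := by
      intro u hu
      have h1 : φ r * u ∈ (J ^ 2 : Ideal S) := by
        have h0 : ((J ^ 2 : Ideal S)).mkQ (φ r * u) = 0 := congrArg Subtype.val hu
        rwa [Submodule.mkQ_apply, Submodule.Quotient.mk_eq_zero] at h0
      rw [hJs, Ideal.span_singleton_pow] at h1
      obtain ⟨v, hv⟩ := Ideal.mem_span_singleton'.mp h1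
      have h2 : φ r * (u - v * φ r) = 0 := by
        linear_combination -hv
      have h3 : u - v * φ r ∈ A := by
        rw [hAdef, Submodule.mem_annihilator]
        intro n hn
        rw [hJs] at hn
        obtain ⟨d, hd⟩ := Ideal.mem_span_singleton'.mp hn
        rw [smul_eq_mul, ← hd]
        calc (u - v * φ r) * (d * φ r) = d * (φ r * (u - v * φ r)) := by ring
        _ = 0 := by rw [h2, mul_zero]
      have h4 : πS (u - v * φ r) ∈ η := Ideal.mem_map_of_mem πS h3
      have h5 : πS (φ r) = 0 := hφrJ
      have h6 : πS u ∈ η := by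
        have : πS u = πS (u - v * φ r) + πS v * πS (φ r) := by
          rw [map_sub, map_mul]; ring
        rw [this, h5, mul_zero, add_zero]
        exact h4
      simp only [hgdef, AddMonoidHom.mk'_apply]
      rwa [Ideal.Quotient.eq_zero_iff_mem]
    exact card_le_of_ker_le f g hfsurj hgsurj hker
  -- cardinality chain forces `F` to be bijective
  have hcard1 : Nat.card ΦS ≤ Nat.card ΦR := Nat.card_le_card_of_surjective F Fsurj
  have hcards : Nat.card ΦR = Nat.card ΦS :=
    le_antisymm (le_trans hcard hcard2) hcard1
  have Fbij : Function.Bijective F :=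
    (Nat.bijective_iff_surjective_and_card F).mpr ⟨Fsurj, hcards⟩
  -- kernel of φ
  set K : Ideal R := RingHom.ker φ with hKdef
  have hKI : K ≤ I := by
    intro x hx
    show πR x = 0
    rw [← hπSφ, hx]
    · simp
  have hKI2 : ∀ x ∈ K, x ∈ (I ^ 2 : Ideal R) := by
    intro x hx
    have hxI : x ∈ I := hKI hx
    have hx0 : φ x = 0 := hx
    have h1 : F ⟨((I ^ 2 : Ideal R)).mkQ x, Submodule.mem_map.mpr ⟨x, hxI, rfl⟩⟩ =
        F ⟨0, Submodule.zero_mem _⟩ := by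
      apply Subtype.ext
      show φbar _ = φbar _
      rw [hq x, hx0]
      simp
    have h2 := Fbij.1 h1
    have h3 : ((I ^ 2 : Ideal R)).mkQ x = 0 := congrArg Subtype.val h2
    rwa [Submodule.mkQ_apply, Submodule.Quotient.mk_eq_zero] at h3
  -- Nakayama
  have hKIK : K ≤ I • K := by
    intro x hx
    have hxI2 := hKI2 x hx
    have hrI2 : I = Ideal.span {r} := hrI
    rw [hrI2, Ideal.span_singleton_pow] at hxI2
    obtain ⟨b, hb⟩ := Ideal.mem_span_singleton'.mp hxI2
    set a : R := b * r with hadef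
    have haI : a ∈ I := by rw [hrI]; exact Ideal.mem_span_singleton'.mpr ⟨b, rfl⟩
    have hxar : x = r * a := by rw [hadef, ← hb]; ring
    have hφa0 : φ a = 0 := by
      apply hzero
      · show πS (φ a) = 0
        rw [hπSφ]; exact haI
      · intro j hj
        rw [hJs] at hj
        obtain ⟨d, hd⟩ := Ideal.mem_span_singleton'.mp hj
        have hrs : φ a * φ r = 0 := by
          rw [← map_mul]
          have : a * r = x := by rw [hxar]; ring
          rw [this]
          exact hx
        calc φ a * j = d * (φ a * φ r) := by rw [← hd]; ring
        _ = 0 := by rw [hrs, mul_zero]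
    have haK : a ∈ K := hφa0
    have h7 := Submodule.smul_mem_smul hrmem haK
    rw [hxar]
    exact h7
  have hIne : I ≠ ⊤ := by
    intro h
    have h1 : (1 : R) ∈ I := by rw [h]; trivial
    have h2 : πR 1 = 0 := h1
    rw [map_one] at h2
    exact one_ne_zero h2
  have hKbot : K = ⊥ :=
    Submodule.eq_bot_of_le_smul_of_le_jacobson_bot I K (IsNoetherian.noetherian K) hKIK
      (by rw [IsLocalRing.jacobson_eq_maximalIdeal ⊥ bot_ne_top]
          exact IsLocalRing.le_maximalIdeal hIne)
  intro x y hxy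
  have : x - y ∈ K := by
    show φ (x - y) = 0
    rw [map_sub, hxy, sub_self]
  rw [hKbot] at this
  have := Submodule.mem_bot R |>.mp this
  exact sub_eq_zero.mp this
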